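/- arXiv:1105.2480 — 5 statements merged into one kernel-verified Lean document; each statement's English description precedes it below -/
import Mathlib

section
/- Let gcd(n,r)=1 and write Q_{n,r}(t) = ((t^{1/n}−t)/(1−t^{1/n}))·((t^{1/r}−t)/(1−t^{1/r})) = Σ_α c_α t^α. Then Q_{n,r}(t) is a polynomial in t^{1/(nr)} with integer coefficients, no exponent α of Q_{n,r} equals 1, and the total sum of coefficients Σ_α c_α equals (n−1)(r−1). -/
open Polynomial

/-- For coprime positive integers `n, r`, the expression
`Q_{n,r}(t) = ((t^{1/n}−t)/(1−t^{1/n}))·((t^{1/r}−t)/(1−t^{1/r}))`, written in the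
variable `s = t^{1/(nr)}` (so `t^{1/n} = s^r`, `t^{1/r} = s^n`, `t = s^{nr}`), is a
polynomial `Q` in `s` with integer coefficients; no exponent of `Q` equals `1`
(i.e. the coefficient of `s^{nr}` vanishes), and the sum of all coefficients is
`(n−1)(r−1)`. -/
theorem stmt2 (n r : ℕ) (hn : 0 < n) (hr : 0 < r) (hnr : Nat.Coprime n r) :
    ∃ Q : Polynomial ℤ,
      Q * ((1 - X ^ r) * (1 - X ^ n)) =
        (X ^ r - X ^ (n * r)) * (X ^ n - X ^ (n * r)) ∧
      Q.coeff (n * r) = 0 ∧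
      Q.eval 1 = ((n : ℤ) - 1) * ((r : ℤ) - 1) := by
  obtain ⟨a, rfl⟩ : ∃ a, n = a + 1 := ⟨n - 1, (Nat.succ_pred_eq_of_pos hn).symm⟩
  obtain ⟨b, rfl⟩ : ∃ b, r = b + 1 := ⟨r - 1, (Nat.succ_pred_eq_of_pos hr).symm⟩
  set n := a + 1
  set r := b + 1
  refine ⟨X ^ (n + r) * ((∑ i ∈ Finset.range a, X ^ (r * i)) *
      (∑ j ∈ Finset.range b, X ^ (n * j))), ?_, ?_, ?_⟩
  · have h1 : (∑ i ∈ Finset.range a, (X : ℤ[X]) ^ (r * i)) * (1 - X ^ r)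
        = 1 - X ^ (r * a) := by
      have := geom_sum_mul ((X : ℤ[X]) ^ r) a
      simp_rw [pow_mul]
      linear_combination -this
    have h2 : (∑ j ∈ Finset.range b, (X : ℤ[X]) ^ (n * j)) * (1 - X ^ n)
        = 1 - X ^ (n * b) := by
      have := geom_sum_mul ((X : ℤ[X]) ^ n) b
      simp_rw [pow_mul]
      linear_combination -this
    calc X ^ (n + r) * ((∑ i ∈ Finset.range a, (X : ℤ[X]) ^ (r * i)) *
          (∑ j ∈ Finset.range b, X ^ (n * j))) * ((1 - X ^ r) * (1 - X ^ n))
        = X ^ (n + r) * (((∑ i ∈ Finset.range a, (X : ℤ[X]) ^ (r * i)) * (1 - X ^ r)) *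
          ((∑ j ∈ Finset.range b, X ^ (n * j)) * (1 - X ^ n))) := by ring
      _ = X ^ (n + r) * ((1 - X ^ (r * a)) * (1 - X ^ (n * b))) := by rw [h1, h2]
      _ = (X ^ r - X ^ (n * r)) * (X ^ n - X ^ (n * r)) := by
          have e1 : n * r = r + r * a := by simp [n, r]; ring
          have e2 : n * r = n + n * b := by simp [n, r]; ring
          nth_rewrite 2 [e2]; rw [e1]
          rw [pow_add, pow_add, pow_add]
          ring
  · have hQ : (X : ℤ[X]) ^ (n + r) * ((∑ i ∈ Finset.range a, X ^ (r * i)) *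
        (∑ j ∈ Finset.range b, X ^ (n * j)))
        = ∑ i ∈ Finset.range a, ∑ j ∈ Finset.range b,
            X ^ (n + r + r * i + n * j) := by
      rw [Finset.sum_mul_sum, Finset.mul_sum]
      refine Finset.sum_congr rfl fun i _ => ?_
      rw [Finset.mul_sum]
      refine Finset.sum_congr rfl fun j _ => ?_
      rw [← pow_add, ← pow_add]; congr 1; ring
    rw [hQ]
    rw [Polynomial.finset_sum_coeff]
    refine Finset.sum_eq_zero fun i hi => ?_
    rw [Polynomial.finset_sum_coeff]
    refine Finset.sum_eq_zero fun j hj => ?_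
    rw [Polynomial.coeff_X_pow, if_neg]
    intro h
    have hi' := Finset.mem_range.mp hi
    have hj' := Finset.mem_range.mp hj
    have key : r * (i + 1) + n * (j + 1) = n * r := by rw [h]; ring
    have key' : n * (j + 1) = n * r - r * (i + 1) := Nat.eq_sub_of_add_eq' key
    have hdvd : r ∣ n * (j + 1) := key' ▸ Nat.dvd_sub ⟨n, by ring⟩ ⟨i + 1, rfl⟩
    have hdvd2 : r ∣ j + 1 := (Nat.Coprime.symm hnr).dvd_of_dvd_mul_left hdvd
    have := Nat.le_of_dvd (Nat.succ_pos j) hdvd2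
    omega
  · simp [eval_finset_sum, n, r]
end

section
/- Let M₀ = ℤ^d and λ₁ ≤ ⋯ ≤ λ_g in ℚ^d_{≥0} with lattices M_j = M_{j−1} + ℤλ_j and indices n_j = [M_j : M_{j−1}] > 1. Define γ₁ = λ₁ and γ_{j+1} = n_j γ_j + λ_{j+1} − λ_j. Then for each j = 1, …, g, the order of γ_j + M_{j−1} in the finite abelian group M_j/M_{j−1} equals n_j. -/
/-- Let `M₀ = ℤ^d ⊂ ℚ^d` and `λ₁, …, λ_g ∈ ℚ^d_{≥0}` with lattices
`M_j = M_{j−1} + ℤλ_j` and `n_j` the order of `λ_j + M_{j−1}` in `M_j/M_{j−1}`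
(equal to the index `[M_j : M_{j−1}] > 1`).  Define `γ₁ = λ₁` and
`γ_{j+1} = n_j γ_j + λ_{j+1} − λ_j`.  Then for each `j = 1, …, g`, the order of
`γ_j + M_{j−1}` in `M_j/M_{j−1}` equals `n_j`. -/
theorem stmt4 (d g : ℕ) (lam γ : ℕ → Fin d → ℚ)
    (M : ℕ → AddSubgroup (Fin d → ℚ)) (n : ℕ → ℕ)
    (hM0 : ∀ x, x ∈ M 0 ↔ ∀ i, ∃ z : ℤ, x i = z)
    (hlam0 : ∀ j i, 1 ≤ j → j ≤ g → 0 ≤ lam j i)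
    (hlamle : ∀ j, 1 ≤ j → j < g → ∀ i, lam j i ≤ lam (j + 1) i)
    (hM : ∀ j, 1 ≤ j → j ≤ g → M j = M (j - 1) ⊔ AddSubgroup.closure {lam j})
    (hn : ∀ j, 1 ≤ j → j ≤ g →
      addOrderOf ((QuotientAddGroup.mk (lam j) : (Fin d → ℚ) ⧸ M (j - 1))) = n j)
    (hn1 : ∀ j, 1 ≤ j → j ≤ g → 1 < n j)
    (hγ1 : γ 1 = lam 1)
    (hγ : ∀ j, 1 ≤ j → j < g →
      γ (j + 1) = (n j : ℚ) • γ j + (lam (j + 1) - lam j)) :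
    ∀ j, 1 ≤ j → j ≤ g →
      addOrderOf ((QuotientAddGroup.mk (γ j) : (Fin d → ℚ) ⧸ M (j - 1))) = n j := by
  -- Key claim: γ j - lam j ∈ M (j-1) for all 1 ≤ j ≤ g.
  have key : ∀ j, 1 ≤ j → j ≤ g → γ j - lam j ∈ M (j - 1) := by
    intro j
    induction j with
    | zero => omega
    | succ j ih =>
      intro h1 h2
      rcases Nat.eq_or_lt_of_le h1 with h | h
      · simp only [← h, hγ1, sub_self]
        exact zero_mem _
      · have hj1 : 1 ≤ j := by omega
        have hjg : j < g := by omega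
        have hjg' : j ≤ g := by omega
        have hmem : γ j - lam j ∈ M (j - 1) := ih hj1 hjg'
        have hMj : M j = M (j - 1) ⊔ AddSubgroup.closure {lam j} := hM j hj1 hjg'
        have hsub : M (j - 1) ≤ M j := hMj ▸ le_sup_left
        have hlamMj : lam j ∈ M j :=
          hMj ▸ (le_sup_right (a := M (j - 1)))
            (AddSubgroup.subset_closure rfl)
        have hnlam : (n j) • lam j ∈ M (j - 1) := by
          have h0 : (n j) • (QuotientAddGroup.mk (lam j) : (Fin d → ℚ) ⧸ M (j - 1)) = 0 := by
            rw [← hn j hj1 hjg']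
            exact addOrderOf_nsmul_eq_zero _
          rwa [← QuotientAddGroup.mk_nsmul, QuotientAddGroup.eq_zero_iff] at h0
        have heq : γ (j + 1) - lam (j + 1)
            = (n j) • (γ j - lam j) + ((n j) • lam j - lam j) := by
          rw [hγ j hj1 hjg, Nat.cast_smul_eq_nsmul, smul_sub]
          abel
        have : γ (j + 1) - lam (j + 1) ∈ M j := by
          rw [heq]
          exact add_mem (hsub (AddSubgroup.nsmul_mem _ hmem _))
            (sub_mem (hsub hnlam) hlamMj)
        simpa using this
  intro j h1 h2
  have : (QuotientAddGroup.mk (γ j) : (Fin d → ℚ) ⧸ M (j - 1))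
      = QuotientAddGroup.mk (lam j) := by
    rw [QuotientAddGroup.eq_iff_sub_mem]
    exact key j h1 h2
  rw [this, hn j h1 h2]
end

section
/- There exists a unique ring homomorphism lim_{T→∞} from the subring M[[T]]_{sr} ⊆ M[[T]] generated over M by 1 and finite products of terms L^e T^i (1 − L^e T^i)^{−1} (with e ∈ ℤ, i ∈ ℤ_{>0}) to M, sending each L^e T^i (1 − L^e T^i)^{−1} to −1. Moreover, if p(T)/q(T) ∈ M[[T]]_{sr} with deg_T p < deg_T q, then lim_{T→∞} p(T)/q(T) = 0. -/
/-- The set of "generators" `L^e T^i (1 − L^e T^i)^{−1}` (with `e ∈ ℤ`, `i > 0`)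
inside the power series ring `M[[T]]`, described implicitly as the unique
solutions `y` of `y·(1 − L^e T^i) = L^e T^i`. -/
def srGens (M : Type*) [CommRing M] (L : Mˣ) : Set (PowerSeries M) :=
  {y | ∃ (e : ℤ) (i : ℕ), 0 < i ∧
    y * (1 - (PowerSeries.C : M →+* PowerSeries M) ((L ^ e : Mˣ) : M) * (PowerSeries.X : PowerSeries M) ^ i) =
      (PowerSeries.C : M →+* PowerSeries M) ((L ^ e : Mˣ) : M) * (PowerSeries.X : PowerSeries M) ^ i}

/-- The subring `M[[T]]_{sr}` of `M[[T]]` generated by the constants and by the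
elements `L^e T^i (1 − L^e T^i)^{−1}` with `e ∈ ℤ`, `i ∈ ℤ_{>0}`. -/
noncomputable def Sr (M : Type*) [CommRing M] (L : Mˣ) : Subring (PowerSeries M) :=
  Subring.closure (Set.range ((PowerSeries.C : M →+* PowerSeries M)) ∪ srGens M L)

/-- The defining property of the limit homomorphism `lim_{T→∞}`:
it is the identity on constants and sends each `L^e T^i (1 − L^e T^i)^{−1}` to `−1`. -/
def LimCond (M : Type*) [CommRing M] (L : Mˣ) (φ : Sr M L →+* M) : Prop :=
  (∀ (m : M) (h : (PowerSeries.C : M →+* PowerSeries M) m ∈ Sr M L), φ ⟨(PowerSeries.C : M →+* PowerSeries M) m, h⟩ = m) ∧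
  (∀ (y : PowerSeries M) (_ : y ∈ srGens M L) (h : y ∈ Sr M L), φ ⟨y, h⟩ = -1)

namespace Stmt8Aux

variable {M : Type*} [CommRing M] (L : Mˣ)

/-- polynomial denominator -/
noncomputable def Qs (s : Multiset (ℤ × ℕ)) : Polynomial M :=
  (s.map fun ei => 1 - Polynomial.C ((L ^ ei.1 : Mˣ) : M) * Polynomial.X ^ ei.2).prod

def Ds (s : Multiset (ℤ × ℕ)) : ℕ := (s.map Prod.snd).sum

noncomputable def lcs (s : Multiset (ℤ × ℕ)) : Mˣ :=
  (s.map fun ei => -(L ^ ei.1)).prod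

lemma Qs_zero : Qs L (0 : Multiset (ℤ × ℕ)) = 1 := by simp [Qs]
lemma Ds_zero : Ds (0 : Multiset (ℤ × ℕ)) = 0 := by simp [Ds]
lemma lcs_zero : lcs L (0 : Multiset (ℤ × ℕ)) = 1 := by simp [lcs]

lemma Qs_add (s t : Multiset (ℤ × ℕ)) : Qs L (s + t) = Qs L s * Qs L t := by
  simp [Qs, Multiset.map_add, Multiset.prod_add]
lemma Ds_add (s t : Multiset (ℤ × ℕ)) : Ds (s + t) = Ds s + Ds t := by
  simp [Ds, Multiset.map_add, Multiset.sum_add]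
lemma lcs_add (s t : Multiset (ℤ × ℕ)) : lcs L (s + t) = lcs L s * lcs L t := by
  simp [lcs, Multiset.map_add, Multiset.prod_add]

lemma coe_Qs (s : Multiset (ℤ × ℕ)) :
    ((Qs L s : Polynomial M) : PowerSeries M) =
      (s.map fun ei => 1 - (PowerSeries.C : M →+* PowerSeries M) ((L ^ ei.1 : Mˣ) : M) *
        (PowerSeries.X : PowerSeries M) ^ ei.2).prod := by
  rw [Qs, ← Polynomial.coeToPowerSeries.ringHom_apply, map_multiset_prod, Multiset.map_map]
  refine congrArg Multiset.prod (Multiset.map_congr rfl ?_)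
  intro ei _
  simp [Polynomial.coeToPowerSeries.ringHom_apply]

lemma natDegree_Qs_le (s : Multiset (ℤ × ℕ)) : (Qs L s).natDegree ≤ Ds s := by
  induction s using Multiset.induction with
  | empty => simp [Qs_zero, Ds_zero]
  | cons a s ih =>
    have h1 : Qs L (a ::ₘ s) = (1 - Polynomial.C ((L ^ a.1 : Mˣ) : M) * Polynomial.X ^ a.2) * Qs L s := by
      simp [Qs, Multiset.map_cons, Multiset.prod_cons]
    have h2 : Ds (a ::ₘ s) = a.2 + Ds s := by simp [Ds, Multiset.map_cons, Multiset.sum_cons]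
    rw [h1, h2]
    refine Polynomial.natDegree_mul_le.trans (add_le_add ?_ ih)
    refine (Polynomial.natDegree_sub_le _ _).trans ?_
    simp only [Polynomial.natDegree_one, max_le_iff]
    exact ⟨Nat.zero_le _, (Polynomial.natDegree_C_mul_le _ _).trans (by simpa using Polynomial.natDegree_X_pow_le _)⟩

lemma coeff_Qs (s : Multiset (ℤ × ℕ)) (hs : ∀ ei ∈ s, 0 < ei.2) :
    (Qs L s).coeff (Ds s) = (lcs L s : M) := by
  induction s using Multiset.induction with
  | empty => simp [Qs_zero, Ds_zero, lcs_zero]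
  | cons a s ih =>
    have ha : 0 < a.2 := hs a (Multiset.mem_cons_self a s)
    have h1 : Qs L (a ::ₘ s) = (1 - Polynomial.C ((L ^ a.1 : Mˣ) : M) * Polynomial.X ^ a.2) * Qs L s := by
      simp [Qs, Multiset.map_cons, Multiset.prod_cons]
    have h2 : Ds (a ::ₘ s) = a.2 + Ds s := by simp [Ds, Multiset.map_cons, Multiset.sum_cons]
    have hd : (1 - Polynomial.C ((L ^ a.1 : Mˣ) : M) * Polynomial.X ^ a.2).natDegree ≤ a.2 := by
      refine (Polynomial.natDegree_sub_le _ _).trans ?_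
      simp only [Polynomial.natDegree_one, max_le_iff]
      exact ⟨Nat.zero_le _, (Polynomial.natDegree_C_mul_le _ _).trans (by simpa using Polynomial.natDegree_X_pow_le _)⟩
    rw [h1, h2, Polynomial.coeff_mul_add_eq_of_natDegree_le hd (natDegree_Qs_le L s),
      ih (fun ei hei => hs ei (Multiset.mem_cons_of_mem hei))]
    have : (1 - Polynomial.C ((L ^ a.1 : Mˣ) : M) * Polynomial.X ^ a.2).coeff a.2
        = -((L ^ a.1 : Mˣ) : M) := by
      rw [Polynomial.coeff_sub, Polynomial.coeff_one, if_neg (by omega), Polynomial.coeff_C_mul,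
        Polynomial.coeff_X_pow, if_pos rfl]
      ring
    rw [this]
    simp [lcs, Multiset.map_cons, Multiset.prod_cons]

/-- `f` has limit `a` at infinity. -/
def HasLim (f : PowerSeries M) (a : M) : Prop :=
  ∃ (p : Polynomial M) (s : Multiset (ℤ × ℕ)), (∀ ei ∈ s, 0 < ei.2) ∧
    f * ((Qs L s : Polynomial M) : PowerSeries M) = (p : PowerSeries M) ∧
    p.natDegree ≤ Ds s ∧ p.coeff (Ds s) = a * (lcs L s : M)

lemma HasLim.unique {f : PowerSeries M} {a b : M}
    (ha : HasLim L f a) (hb : HasLim L f b) : a = b := by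
  obtain ⟨p₁, s₁, hs₁, he₁, hd₁, hc₁⟩ := ha
  obtain ⟨p₂, s₂, hs₂, he₂, hd₂, hc₂⟩ := hb
  have key : (p₁ * Qs L s₂ : Polynomial M) = p₂ * Qs L s₁ := by
    refine Polynomial.coe_inj.mp ?_
    rw [Polynomial.coe_mul, Polynomial.coe_mul, ← he₁, ← he₂]; ring
  have := congrArg (fun q : Polynomial M => q.coeff (Ds s₁ + Ds s₂)) key
  rw [Polynomial.coeff_mul_add_eq_of_natDegree_le hd₁ (natDegree_Qs_le L s₂)] at this
  rw [add_comm (Ds s₁), Polynomial.coeff_mul_add_eq_of_natDegree_le hd₂ (natDegree_Qs_le L s₁)] at this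
  rw [hc₁, hc₂, coeff_Qs L s₁ hs₁, coeff_Qs L s₂ hs₂] at this
  have h2 : a * ((lcs L s₁ * lcs L s₂ : Mˣ) : M) = b * ((lcs L s₁ * lcs L s₂ : Mˣ) : M) := by
    push_cast; linear_combination this
  exact (Units.mul_left_inj _).mp h2

lemma HasLim.add {f g : PowerSeries M} {a b : M}
    (ha : HasLim L f a) (hb : HasLim L g b) : HasLim L (f + g) (a + b) := by
  obtain ⟨p₁, s₁, hs₁, he₁, hd₁, hc₁⟩ := ha
  obtain ⟨p₂, s₂, hs₂, he₂, hd₂, hc₂⟩ := hb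
  refine ⟨p₁ * Qs L s₂ + p₂ * Qs L s₁, s₁ + s₂, ?_, ?_, ?_, ?_⟩
  · intro ei hei; rw [Multiset.mem_add] at hei
    exact hei.elim (hs₁ ei) (hs₂ ei)
  · rw [Qs_add, Polynomial.coe_add, Polynomial.coe_mul, Polynomial.coe_mul, Polynomial.coe_mul,
      ← he₁, ← he₂]; ring
  · rw [Ds_add]
    refine (Polynomial.natDegree_add_le _ _).trans (max_le ?_ ?_)
    · exact Polynomial.natDegree_mul_le.trans (add_le_add hd₁ (natDegree_Qs_le L s₂))
    · rw [add_comm (Ds s₁)]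
      exact Polynomial.natDegree_mul_le.trans (add_le_add hd₂ (natDegree_Qs_le L s₁))
  · rw [Ds_add, Polynomial.coeff_add,
      Polynomial.coeff_mul_add_eq_of_natDegree_le hd₁ (natDegree_Qs_le L s₂),
      add_comm (Ds s₁), Polynomial.coeff_mul_add_eq_of_natDegree_le hd₂ (natDegree_Qs_le L s₁),
      hc₁, hc₂, coeff_Qs L s₁ hs₁, coeff_Qs L s₂ hs₂, lcs_add]
    push_cast; ring

lemma HasLim.mul {f g : PowerSeries M} {a b : M}
    (ha : HasLim L f a) (hb : HasLim L g b) : HasLim L (f * g) (a * b) := by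
  obtain ⟨p₁, s₁, hs₁, he₁, hd₁, hc₁⟩ := ha
  obtain ⟨p₂, s₂, hs₂, he₂, hd₂, hc₂⟩ := hb
  refine ⟨p₁ * p₂, s₁ + s₂, ?_, ?_, ?_, ?_⟩
  · intro ei hei; rw [Multiset.mem_add] at hei
    exact hei.elim (hs₁ ei) (hs₂ ei)
  · rw [Qs_add, Polynomial.coe_mul, Polynomial.coe_mul, ← he₁, ← he₂]; ring
  · rw [Ds_add]
    exact Polynomial.natDegree_mul_le.trans (add_le_add hd₁ hd₂)
  · rw [Ds_add, Polynomial.coeff_mul_add_eq_of_natDegree_le hd₁ hd₂, hc₁, hc₂, lcs_add]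
    push_cast; ring

lemma HasLim.neg {f : PowerSeries M} {a : M} (ha : HasLim L f a) : HasLim L (-f) (-a) := by
  obtain ⟨p, s, hs, he, hd, hc⟩ := ha
  exact ⟨-p, s, hs, by rw [Polynomial.coe_neg, ← he]; ring, (Polynomial.natDegree_neg p).le.trans hd,
    by rw [Polynomial.coeff_neg, hc]; ring⟩

lemma HasLim.C (m : M) : HasLim L ((PowerSeries.C : M →+* PowerSeries M) m) m :=
  ⟨Polynomial.C m, 0, by simp, by simp [Qs_zero], by simp [Ds_zero], by simp [Ds_zero, lcs_zero]⟩

lemma HasLim.zero : HasLim L (0 : PowerSeries M) 0 := by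
  simpa using HasLim.C L (0 : M)

lemma HasLim.one : HasLim L (1 : PowerSeries M) 1 := by
  simpa using HasLim.C L (1 : M)

lemma HasLim.gen {y : PowerSeries M} (hy : y ∈ srGens M L) : HasLim L y (-1) := by
  obtain ⟨e, i, hi, hy⟩ := hy
  refine ⟨Polynomial.C ((L ^ e : Mˣ) : M) * Polynomial.X ^ i, {(e, i)}, ?_, ?_, ?_, ?_⟩
  · intro ei hei
    rw [Multiset.mem_singleton] at hei
    subst hei; exact hi
  · have hQ : ((Qs L {(e, i)} : Polynomial M) : PowerSeries M) =
        1 - (PowerSeries.C : M →+* PowerSeries M) ((L ^ e : Mˣ) : M) * (PowerSeries.X : PowerSeries M) ^ i := by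
      show ((Qs L ((e, i) ::ₘ 0) : Polynomial M) : PowerSeries M) = _
      rw [Qs, Multiset.map_cons, Multiset.prod_cons, Multiset.map_zero, Multiset.prod_zero,
        mul_one, Polynomial.coe_sub, Polynomial.coe_one, Polynomial.coe_mul, Polynomial.coe_C,
        Polynomial.coe_pow, Polynomial.coe_X]
    rw [hQ, hy, Polynomial.coe_mul, Polynomial.coe_C, Polynomial.coe_pow, Polynomial.coe_X]
  · have hD : Ds ({(e, i)} : Multiset (ℤ × ℕ)) = i := by simp [Ds]
    rw [hD]
    exact (Polynomial.natDegree_C_mul_le _ _).trans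
      (by simpa using Polynomial.natDegree_X_pow_le (R := M) i)
  · have hD : Ds ({(e, i)} : Multiset (ℤ × ℕ)) = i := by simp [Ds]
    have hl : (lcs L ({(e, i)} : Multiset (ℤ × ℕ)) : M) = -((L ^ e : Mˣ) : M) := by
      show ((lcs L ((e, i) ::ₘ 0) : Mˣ) : M) = _
      rw [lcs, Multiset.map_cons, Multiset.prod_cons, Multiset.map_zero, Multiset.prod_zero,
        mul_one]
      simp
    rw [hD, hl, Polynomial.coeff_C_mul, Polynomial.coeff_X_pow, if_pos rfl]
    ring

lemma exists_hasLim (x : PowerSeries M) (hx : x ∈ Sr M L) : ∃ a, HasLim L x a := by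
  induction hx using Subring.closure_induction with
  | mem y hy =>
    rcases hy with hy | hy
    · obtain ⟨m, rfl⟩ := hy
      exact ⟨m, HasLim.C L m⟩
    · exact ⟨-1, HasLim.gen L hy⟩
  | zero => exact ⟨0, HasLim.zero L⟩
  | one => exact ⟨1, HasLim.one L⟩
  | add x y hx hy ihx ihy =>
    obtain ⟨a, ha⟩ := ihx; obtain ⟨b, hb⟩ := ihy
    exact ⟨a + b, ha.add L hb⟩
  | neg x hx ihx =>
    obtain ⟨a, ha⟩ := ihx
    exact ⟨-a, ha.neg L⟩
  | mul x y hx hy ihx ihy =>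
    obtain ⟨a, ha⟩ := ihx; obtain ⟨b, hb⟩ := ihy
    exact ⟨a * b, ha.mul L hb⟩

noncomputable def limVal (x : Sr M L) : M := (exists_hasLim L x.1 x.2).choose

lemma hasLim_limVal (x : Sr M L) : HasLim L x.1 (limVal L x) :=
  (exists_hasLim L x.1 x.2).choose_spec

noncomputable def limHom : Sr M L →+* M where
  toFun := limVal L
  map_one' := HasLim.unique L (hasLim_limVal L 1) (HasLim.one L)
  map_zero' := HasLim.unique L (hasLim_limVal L 0) (HasLim.zero L)
  map_add' x y := HasLim.unique L (hasLim_limVal L (x + y))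
    (HasLim.add L (hasLim_limVal L x) (hasLim_limVal L y))
  map_mul' x y := HasLim.unique L (hasLim_limVal L (x * y))
    (HasLim.mul L (hasLim_limVal L x) (hasLim_limVal L y))

lemma limCond_limHom : LimCond M L (limHom L) :=
  ⟨fun m h => HasLim.unique L (hasLim_limVal L ⟨_, h⟩) (HasLim.C L m),
   fun y hy h => HasLim.unique L (hasLim_limVal L ⟨_, h⟩) (HasLim.gen L hy)⟩

lemma eq_limHom (ψ : Sr M L →+* M) (hψ : LimCond M L ψ) : ψ = limHom L := by
  ext x
  obtain ⟨x, hx⟩ := x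
  induction hx using Subring.closure_induction with
  | mem y hy =>
    rcases hy with hy' | hy'
    · obtain ⟨m, rfl⟩ := hy'
      exact (hψ.1 m _).trans ((limCond_limHom L).1 m _).symm
    · exact (hψ.2 y hy' _).trans ((limCond_limHom L).2 y hy' _).symm
  | zero => exact (map_zero ψ).trans (map_zero (limHom L)).symm
  | one => exact (map_one ψ).trans (map_one (limHom L)).symm
  | add x y hx hy ihx ihy =>
    exact (map_add ψ ⟨x, hx⟩ ⟨y, hy⟩).trans
      (by rw [ihx, ihy, ← map_add (limHom L) ⟨x, hx⟩ ⟨y, hy⟩])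
  | neg x hx ihx =>
    exact (map_neg ψ ⟨x, hx⟩).trans (by rw [ihx, ← map_neg (limHom L) ⟨x, hx⟩])
  | mul x y hx hy ihx ihy =>
    exact (map_mul ψ ⟨x, hx⟩ ⟨y, hy⟩).trans
      (by rw [ihx, ihy, ← map_mul (limHom L) ⟨x, hx⟩ ⟨y, hy⟩])

end Stmt8Aux

theorem stmt8' (M : Type*) [CommRing M] (L : Mˣ) :
    (∃! φ : Sr M L →+* M, LimCond M L φ) ∧
    (∀ φ : Sr M L →+* M, LimCond M L φ →
      ∀ (x : Sr M L) (p : Polynomial M) (s : Multiset (ℤ × ℕ)),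
        (∀ ei ∈ s, 0 < ei.2) →
        (x : PowerSeries M) *
            (s.map (fun ei =>
              1 - (PowerSeries.C : M →+* PowerSeries M) ((L ^ ei.1 : Mˣ) : M) *
                (PowerSeries.X : PowerSeries M) ^ ei.2)).prod =
          (p : PowerSeries M) →
        p.natDegree < (s.map Prod.snd).sum → φ x = 0) := by
  open Stmt8Aux in
  constructor
  · exact ⟨limHom L, limCond_limHom L, fun ψ hψ => eq_limHom L ψ hψ⟩
  · intro φ hφ x p s hs heq hdeg
    have hφ' : φ = Stmt8Aux.limHom L := Stmt8Aux.eq_limHom L φ hφ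
    subst hφ'
    have hD : Stmt8Aux.Ds s = (s.map Prod.snd).sum := rfl
    have h0 : Stmt8Aux.HasLim L (x : PowerSeries M) 0 := by
      refine ⟨p, s, hs, ?_, ?_, ?_⟩
      · rw [Stmt8Aux.coe_Qs]; exact heq
      · rw [hD]; exact hdeg.le
      · rw [hD, Polynomial.coeff_eq_zero_of_natDegree_lt hdeg, zero_mul]
    exact Stmt8Aux.HasLim.unique L (Stmt8Aux.hasLim_limVal L x) h0


/-- There exists a unique ring homomorphism `lim_{T→∞} : M[[T]]_{sr} → M` sending
each `L^e T^i (1 − L^e T^i)^{−1}` to `−1` (and each constant to itself).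
Moreover, if `p(T)/q(T) ∈ M[[T]]_{sr}` with `q` a finite product of factors
`(1 − L^e T^i)` (`i > 0`) and `deg_T p < deg_T q = Σ i`, then
`lim_{T→∞} p(T)/q(T) = 0`. -/
theorem stmt8 (M : Type*) [CommRing M] (L : Mˣ) :
    (∃! φ : Sr M L →+* M, LimCond M L φ) ∧
    (∀ φ : Sr M L →+* M, LimCond M L φ →
      ∀ (x : Sr M L) (p : Polynomial M) (s : Multiset (ℤ × ℕ)),
        (∀ ei ∈ s, 0 < ei.2) →
        (x : PowerSeries M) *
            (s.map (fun ei =>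
              1 - (PowerSeries.C : M →+* PowerSeries M) ((L ^ ei.1 : Mˣ) : M) *
                (PowerSeries.X : PowerSeries M) ^ ei.2)).prod =
          (p : PowerSeries M) →
        p.natDegree < (s.map Prod.snd).sum → φ x = 0) := by
  exact stmt8' M L
end

section
/- With φ₁ : M₀ × ℤ → M₁, (λ,a) ↦ λ + aλ₁ as above, and ρ̄₁ = { (ν, ⟨ν, λ₁⟩) : ν ∈ ℝ^d_{≥0} } ⊂ ℝ^{d+1}, one has φ₁^{−1}( (ℝ^d_{≥0})^∨ ∩ M₁ ) = ρ̄₁^∨ ∩ (M₀ × ℤ), and consequently the semigroup ρ̄₁^∨ ∩ (M₀ × ℤ) is isomorphic to (ℚ^d_{≥0} ∩ M₁) × ℤ. -/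
/-- The lattice `M₀ = ℤ^d` inside `ℚ^d`. -/
def latM0 (d : ℕ) : AddSubgroup (Fin d → ℚ) where
  carrier := {x | ∀ i, ∃ z : ℤ, x i = z}
  zero_mem' := fun i => ⟨0, by simp⟩
  add_mem' := by
    intro a b ha hb i
    obtain ⟨za, hza⟩ := ha i
    obtain ⟨zb, hzb⟩ := hb i
    exact ⟨za + zb, by simp [hza, hzb]⟩
  neg_mem' := by
    intro a ha i
    obtain ⟨z, hz⟩ := ha i
    exact ⟨-z, by simp [hz]⟩


lemma bezout_aux (d : ℕ) (lam : Fin d → ℚ) :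
    ∃ (k : ℤ) (K : Fin d → ℤ) (c : ℤ) (μ : Fin d → ℤ),
      0 < k ∧ (∀ i, (K i : ℚ) = (k : ℚ) * lam i) ∧ c * k + ∑ i, μ i * K i = 1 := by
  classical
  set D : ℤ := ∏ i, ((lam i).den : ℤ) with hD
  have hDpos : 0 < D := Finset.prod_pos (fun i _ => by exact_mod_cast (lam i).pos)
  have hden : ∀ i : Fin d, ((lam i).den : ℤ) ∣ D :=
    fun i => Finset.dvd_prod_of_mem _ (Finset.mem_univ i)
  set K0 : Fin d → ℤ := fun i => (D / ((lam i).den : ℤ)) * (lam i).num with hK0def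
  have hK0 : ∀ i, (K0 i : ℚ) = (D : ℚ) * lam i := by
    intro i
    have h1 : ((lam i).den : ℤ) * (D / ((lam i).den : ℤ)) = D :=
      Int.mul_ediv_cancel' (hden i)
    have h2 : ((lam i).den : ℚ) ≠ 0 := by exact_mod_cast (lam i).den_nz
    have h3 : lam i = ((lam i).num : ℚ) / ((lam i).den : ℚ) := (Rat.num_div_den _).symm
    have h4 : (((lam i).den : ℤ) : ℚ) * ((D / ((lam i).den : ℤ) : ℤ) : ℚ) = (D : ℚ) := by
      exact_mod_cast congrArg (Int.cast : ℤ → ℚ) h1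
    have h5 : ((D / ((lam i).den : ℤ) : ℤ) : ℚ) = (D : ℚ) / (((lam i).den : ℤ) : ℚ) := by
      rw [eq_div_iff (by exact_mod_cast (lam i).den_nz)]
      linear_combination h4
    have h6 : (K0 i : ℚ) = ((D / ((lam i).den : ℤ) : ℤ) : ℚ) * (((lam i).num : ℤ) : ℚ) := by
      simp only [hK0def]; push_cast; ring
    have h2' : (((lam i).den : ℤ) : ℚ) ≠ 0 := by exact_mod_cast (lam i).den_nz
    have h7 : lam i * (((lam i).den : ℤ) : ℚ) = (((lam i).num : ℤ) : ℚ) := by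
      push_cast; nth_rewrite 1 [h3]; exact div_mul_cancel₀ _ h2
    rw [h6, h5, div_mul_eq_mul_div, eq_comm, eq_div_iff h2']
    linear_combination (D : ℚ) * h7
  set v : Fin (d + 1) → ℤ := Fin.cons D K0 with hv
  set S : Ideal ℤ := Ideal.span (Set.range v) with hS
  have hDmem : D ∈ S := Ideal.subset_span ⟨0, by simp [hv]⟩
  have hK0mem : ∀ i, K0 i ∈ S := fun i => Ideal.subset_span ⟨i.succ, by simp [hv]⟩
  set g0 : ℤ := Submodule.IsPrincipal.generator S with hg0
  set g : ℤ := (g0.natAbs : ℤ) with hg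
  have hgD : g ∣ D := by
    rw [hg, Int.natAbs_dvd]
    exact (Submodule.IsPrincipal.mem_iff_generator_dvd S).1 hDmem
  have hgK : ∀ i, g ∣ K0 i := by
    intro i
    rw [hg, Int.natAbs_dvd]
    exact (Submodule.IsPrincipal.mem_iff_generator_dvd S).1 (hK0mem i)
  have hgmem : g ∈ S := by
    rcases Int.natAbs_eq g0 with h | h
    · rw [hg, ← h]; exact Submodule.IsPrincipal.generator_mem S
    · have h' : g = -g0 := by rw [hg]; omega
      rw [h']; exact neg_mem (Submodule.IsPrincipal.generator_mem S)
  have hgne : g ≠ 0 := by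
    intro h
    rw [h] at hgD
    exact absurd (zero_dvd_iff.1 hgD) (by omega)
  have hgnn : 0 ≤ g := by rw [hg]; positivity
  have hgq : (g : ℚ) ≠ 0 := by exact_mod_cast hgne
  obtain ⟨f, hf⟩ := (Submodule.mem_span_range_iff_exists_fun ℤ).1 hgmem
  refine ⟨D / g, fun i => K0 i / g, f 0, fun i => f i.succ, ?_, ?_, ?_⟩
  · have h1 : g * (D / g) = D := Int.mul_ediv_cancel' hgD
    nlinarith [h1]
  · intro i
    have e1 : ((K0 i / g : ℤ) : ℚ) = (K0 i : ℚ) / (g : ℚ) := by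
      rw [eq_div_iff hgq]
      exact_mod_cast congrArg (Int.cast : ℤ → ℚ) (Int.ediv_mul_cancel (hgK i))
    have e2 : ((D / g : ℤ) : ℚ) = (D : ℚ) / (g : ℚ) := by
      rw [eq_div_iff hgq]
      exact_mod_cast congrArg (Int.cast : ℤ → ℚ) (Int.ediv_mul_cancel hgD)
    rw [e1, e2, hK0 i]
    ring
  · have hsum : ∑ j : Fin (d + 1), f j • v j = f 0 * D + ∑ i, f i.succ * K0 i := by
      rw [Fin.sum_univ_succ]
      simp [hv, smul_eq_mul]
    rw [hsum] at hf
    have hexp : f 0 * (g * (D / g)) + ∑ i, f i.succ * (g * (K0 i / g)) = g := by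
      rw [Int.mul_ediv_cancel' hgD]
      have h7 : ∀ i, g * (K0 i / g) = K0 i := fun i => Int.mul_ediv_cancel' (hgK i)
      simp_rw [h7]
      exact hf
    have hdist : g * (f 0 * (D / g) + ∑ i, f i.succ * (K0 i / g))
        = f 0 * (g * (D / g)) + ∑ i, f i.succ * (g * (K0 i / g)) := by
      rw [mul_add, Finset.mul_sum]
      congr 1
      · ring
      · exact Finset.sum_congr rfl fun i _ => by ring
    exact mul_left_cancel₀ hgne (by rw [mul_one]; exact hdist.trans hexp)

lemma realdual_iff (d : ℕ) (lam : Fin d → ℚ) (p : (Fin d → ℤ) × ℤ) :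
    (∀ ν : Fin d → ℝ, (∀ i, 0 ≤ ν i) →
        0 ≤ ∑ i, ν i * ((p.1 i : ℝ) + (p.2 : ℝ) * (lam i : ℝ))) ↔
      ∀ i, 0 ≤ (p.1 i : ℚ) + (p.2 : ℚ) * lam i := by
  constructor
  · intro h i
    have h1 := h (fun j => if j = i then 1 else 0) (fun j => by positivity)
    have h2 : ∑ j, (if j = i then (1:ℝ) else 0) * ((p.1 j : ℝ) + (p.2 : ℝ) * (lam j : ℝ))
        = (p.1 i : ℝ) + (p.2 : ℝ) * (lam i : ℝ) := by
      rw [Finset.sum_eq_single i]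
      · simp
      · intro j _ hj; simp [hj]
      · intro hi; exact absurd (Finset.mem_univ i) hi
    rw [h2] at h1
    exact_mod_cast h1
  · intro h ν hν
    apply Finset.sum_nonneg
    intro i _
    apply mul_nonneg (hν i)
    exact_mod_cast h i

/-- With `φ₁ : M₀ × ℤ → M₁`, `(λ,a) ↦ λ + aλ₁`, and the graph cone
`ρ̄₁ = {(ν, ⟨ν, λ₁⟩) : ν ∈ ℝ^d_{≥0}}`, one has
`φ₁^{−1}(ρ^∨ ∩ M₁) = ρ̄₁^∨ ∩ (M₀ × ℤ)`: i.e. `(m,a)` pairs nonnegatively with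
every `(ν, ⟨ν,λ₁⟩)`, `ν ≥ 0`, iff `m + aλ₁` has nonnegative coordinates.
Consequently the semigroup `ρ̄₁^∨ ∩ (M₀ × ℤ)` is isomorphic to
`(ℚ^d_{≥0} ∩ M₁) × ℤ`. -/
theorem stmt12 (d : ℕ) (lam : Fin d → ℚ)
    (hlam0 : ∀ i, 0 ≤ lam i)
    (hlam : ¬ ∀ i, ∃ z : ℤ, lam i = z) :
    (∀ p : (Fin d → ℤ) × ℤ,
      ((∀ ν : Fin d → ℝ, (∀ i, 0 ≤ ν i) →
          0 ≤ ∑ i, ν i * ((p.1 i : ℝ) + (p.2 : ℝ) * (lam i : ℝ))) ↔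
        ∀ i, 0 ≤ (p.1 i : ℚ) + (p.2 : ℚ) * lam i)) ∧
    (∃ e : {p : (Fin d → ℤ) × ℤ // ∀ ν : Fin d → ℝ, (∀ i, 0 ≤ ν i) →
          0 ≤ ∑ i, ν i * ((p.1 i : ℝ) + (p.2 : ℝ) * (lam i : ℝ))} ≃
        {q : (Fin d → ℚ) × ℤ // (∀ i, 0 ≤ q.1 i) ∧
          q.1 ∈ latM0 d ⊔ AddSubgroup.closure {lam}},
      ∀ a b c, (a : {p : (Fin d → ℤ) × ℤ // ∀ ν : Fin d → ℝ, (∀ i, 0 ≤ ν i) →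
          0 ≤ ∑ i, ν i * ((p.1 i : ℝ) + (p.2 : ℝ) * (lam i : ℝ))}).1 + b.1 = c.1 →
        (e a).1 + (e b).1 = (e c).1) := by
  classical
  obtain ⟨k, K, c, μ, hk, hK, hbz⟩ := bezout_aux d lam
  have hkne : (k : ℤ) ≠ 0 := hk.ne'
  have hiff := realdual_iff d lam
  refine ⟨hiff, ?_⟩
  -- the forward map
  let f : {p : (Fin d → ℤ) × ℤ // ∀ ν : Fin d → ℝ, (∀ i, 0 ≤ ν i) →
          0 ≤ ∑ i, ν i * ((p.1 i : ℝ) + (p.2 : ℝ) * (lam i : ℝ))} →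
      {q : (Fin d → ℚ) × ℤ // (∀ i, 0 ≤ q.1 i) ∧
          q.1 ∈ latM0 d ⊔ AddSubgroup.closure {lam}} :=
    fun p => ⟨((fun i => (p.1.1 i : ℚ) + (p.1.2 : ℚ) * lam i),
               c * p.1.2 - ∑ i, μ i * p.1.1 i),
      (hiff p.1).1 p.2, by
        rw [AddSubgroup.mem_sup]
        refine ⟨(fun i => (p.1.1 i : ℚ)), fun i => ⟨p.1.1 i, rfl⟩,
          p.1.2 • lam, AddSubgroup.mem_closure_singleton.2 ⟨p.1.2, rfl⟩, ?_⟩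
        funext i
        simp [Pi.add_apply, Pi.smul_apply, zsmul_eq_mul]⟩
  have hinj : Function.Injective f := by
    rintro ⟨p, hp⟩ ⟨p', hp'⟩ hfe
    have h0 := congrArg Subtype.val hfe
    have h1 : ∀ i, (p.1 i : ℚ) + (p.2 : ℚ) * lam i = (p'.1 i : ℚ) + (p'.2 : ℚ) * lam i :=
      fun i => congrFun (congrArg Prod.fst h0) i
    have h2 : c * p.2 - ∑ i, μ i * p.1 i = c * p'.2 - ∑ i, μ i * p'.1 i :=
      congrArg Prod.snd h0
    have hZ : ∀ i, k * p.1 i + p.2 * K i = k * p'.1 i + p'.2 * K i := by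
      intro i
      have hq : (k : ℚ) * (p.1 i : ℚ) + (p.2 : ℚ) * (K i : ℚ)
          = (k : ℚ) * (p'.1 i : ℚ) + (p'.2 : ℚ) * (K i : ℚ) := by
        linear_combination (k : ℚ) * h1 i + ((p.2 : ℚ) - (p'.2 : ℚ)) * hK i
      exact_mod_cast hq
    have e1 : ∀ q : (Fin d → ℤ) × ℤ,
        ∑ i, μ i * (k * q.1 i + q.2 * K i)
          = k * (∑ i, μ i * q.1 i) + q.2 * (∑ i, μ i * K i) := by
      intro q
      rw [Finset.mul_sum, Finset.mul_sum, ← Finset.sum_add_distrib]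
      exact Finset.sum_congr rfl fun i _ => by ring
    have hsum : k * (∑ i, μ i * p.1 i) + p.2 * (∑ i, μ i * K i)
        = k * (∑ i, μ i * p'.1 i) + p'.2 * (∑ i, μ i * K i) := by
      rw [← e1 p, ← e1 p']
      exact Finset.sum_congr rfl fun i _ => by rw [hZ i]
    have hp2 : p.2 = p'.2 := by
      linear_combination k * h2 + hsum - (p.2 - p'.2) * hbz
    have hp1 : p.1 = p'.1 := by
      funext i
      have := hZ i
      rw [hp2] at this
      have hki : k * p.1 i = k * p'.1 i := by linarith
      exact mul_left_cancel₀ hkne hki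
    exact Subtype.ext (Prod.ext hp1 hp2)
  have hsurj : Function.Surjective f := by
    rintro ⟨⟨q, n⟩, hq, hmem⟩
    rw [AddSubgroup.mem_sup] at hmem
    obtain ⟨y, hy, w, hw, hywq⟩ := hmem
    obtain ⟨z, hzw⟩ := AddSubgroup.mem_closure_singleton.1 hw
    have hy' : ∀ i, ∃ t : ℤ, y i = t := hy
    choose m0 hm0 using hy'
    have hqi : ∀ i, q i = (m0 i : ℚ) + (z : ℚ) * lam i := by
      intro i
      have hywq' : y + w = q := hywq
      rw [← hywq']
      have hwi : w i = (z : ℚ) * lam i := by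
        rw [← hzw]; simp [Pi.smul_apply, zsmul_eq_mul]
      simp [Pi.add_apply, hwi, hm0 i]
    set s : ℤ := n - (c * z - ∑ i, μ i * m0 i) with hs
    set a : ℤ := z + s * k with ha
    set m : Fin d → ℤ := fun i => m0 i - s * K i with hm
    have hcoord : ∀ i, ((m i : ℚ) + (a : ℚ) * lam i) = q i := by
      intro i
      rw [hqi i, hm, ha]
      push_cast
      linear_combination (-(s : ℚ)) * hK i
    have hA : ∀ ν : Fin d → ℝ, (∀ i, 0 ≤ ν i) →
        0 ≤ ∑ i, ν i * (((m, a).1 i : ℝ) + (((m, a).2 : ℤ) : ℝ) * (lam i : ℝ)) := by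
      apply (hiff (m, a)).2
      intro i
      rw [hcoord i]
      exact hq i
    refine ⟨⟨(m, a), hA⟩, ?_⟩
    apply Subtype.ext
    apply Prod.ext
    · funext i
      exact hcoord i
    · show c * a - ∑ i, μ i * m i = n
      have hms : ∑ i, μ i * m i = (∑ i, μ i * m0 i) - s * ∑ i, μ i * K i := by
        rw [hm, Finset.mul_sum, ← Finset.sum_sub_distrib]
        exact Finset.sum_congr rfl fun i _ => by ring
      rw [hms, ha]
      linear_combination s * hbz + hs
  refine ⟨Equiv.ofBijective f ⟨hinj, hsurj⟩, ?_⟩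
  intro x y zz h
  have h1 : x.1.1 + y.1.1 = zz.1.1 := congrArg Prod.fst h
  have h2 : x.1.2 + y.1.2 = zz.1.2 := congrArg Prod.snd h
  show (f x).1 + (f y).1 = (f zz).1
  apply Prod.ext
  · funext i
    have h1i : x.1.1 i + y.1.1 i = zz.1.1 i := congrFun h1 i
    show ((x.1.1 i : ℚ) + (x.1.2 : ℚ) * lam i) + ((y.1.1 i : ℚ) + (y.1.2 : ℚ) * lam i)
        = (zz.1.1 i : ℚ) + (zz.1.2 : ℚ) * lam i
    have h1i' : (x.1.1 i : ℚ) + (y.1.1 i : ℚ) = (zz.1.1 i : ℚ) := by exact_mod_cast congrArg (Int.cast : ℤ → ℚ) h1i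
    have h2' : (x.1.2 : ℚ) + (y.1.2 : ℚ) = (zz.1.2 : ℚ) := by exact_mod_cast congrArg (Int.cast : ℤ → ℚ) h2
    linear_combination h1i' + lam i * h2'
  · show (c * x.1.2 - ∑ i, μ i * x.1.1 i) + (c * y.1.2 - ∑ i, μ i * y.1.1 i)
        = c * zz.1.2 - ∑ i, μ i * zz.1.1 i
    have hsz : ∑ i, μ i * zz.1.1 i = ∑ i, μ i * x.1.1 i + ∑ i, μ i * y.1.1 i := by
      rw [← Finset.sum_add_distrib]
      refine Finset.sum_congr rfl fun i _ => ?_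
      have : zz.1.1 i = x.1.1 i + y.1.1 i := (congrFun h1 i).symm
      rw [this]; ring
    rw [hsz]
    linear_combination c * h2
end

section
/- Define B_i^{(1)} := e_0 q_i^{(1)}, B_i^{(j)} := p_i^{(j)} B_i^{(j−1)} + e_{j−1} q_i^{(j)}, b_i^{(1)} := p_i^{(1)} + q_i^{(1)}, b_i^{(j)} := p_i^{(j)} b_i^{(j−1)} + q_i^{(j)}. Let ν_i^{(j)} = s_j(ε_i^{(j)}) ∈ ℤ^{d+g+1} where ε_i^{(j)} = p_i^{(j)} ε_i^{(j−1)} (with ε_i^{(0)} = ε_i the standard basis). Then B_i^{(j)} = η(ν_i^{(j)}) and b_i^{(j)} = ξ_j(ν_i^{(j)}) for all 1 ≤ i ≤ d and 1 ≤ j ≤ g, where η(k) = k_{d+g+1}. -/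
/-- Setting: characteristic exponents `λ_j ∈ ℚ^d` of a quasi-ordinary branch with
`λ_j − λ_{j−1} = Σ_i (q_i^{(j)}/p_i^{(j)}) ε_i^{(j−1)}` in irreducible form in the
rescaled dual basis (so coordinatewise
`(λ_j − λ_{j−1})_i · p_i^{(1)}⋯p_i^{(j)} = q_i^{(j)}`), and semigroup generators
`γ_j` with `γ_1 = λ_1`, `γ_{j+1} = n_j γ_j + λ_{j+1} − λ_j`.
Define `B_i^{(1)} = e_0 q_i^{(1)}`, `B_i^{(j)} = p_i^{(j)} B_i^{(j−1)} + e_{j−1} q_i^{(j)}`,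
`b_i^{(1)} = p_i^{(1)} + q_i^{(1)}`, `b_i^{(j)} = p_i^{(j)} b_i^{(j−1)} + q_i^{(j)}`,
where `e_{j−1} = n_j⋯n_g`.  Then `B_i^{(j)} = η(ν_i^{(j)})` and
`b_i^{(j)} = ξ_j(ν_i^{(j)})`, where `ν_i^{(j)} = s_j(ε_i^{(j)})` with
`ε_i^{(j)} = (p_i^{(1)}⋯p_i^{(j)}) ε_i`; explicitly
`η(ν_i^{(j)}) = (n_j⋯n_g)·(p_i^{(1)}⋯p_i^{(j)})·γ_{j,i}` and
`ξ_j(ν_i^{(j)}) = (p_i^{(1)}⋯p_i^{(j)})·(1 + Σ_{l=1}^{j−1}(1−n_l)γ_{l,i} + γ_{j,i})`. -/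
theorem stmt15 (d g : ℕ) (p q : ℕ → Fin d → ℕ) (n : ℕ → ℕ)
    (lam γ : ℕ → Fin d → ℚ) (B b : ℕ → Fin d → ℤ)
    (hg : 1 ≤ g)
    (hp : ∀ j i, 0 < p j i)
    (hpq : ∀ j i, Nat.Coprime (p j i) (q j i))
    (hlam0 : lam 0 = 0)
    (hlamrec : ∀ j, 1 ≤ j → j ≤ g → ∀ i,
      (lam j i - lam (j - 1) i) * (∏ l ∈ Finset.Icc 1 j, (p l i : ℚ)) = q j i)
    (hγ1 : γ 1 = lam 1)
    (hγ : ∀ j, 1 ≤ j → j < g →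
      γ (j + 1) = (n j : ℚ) • γ j + (lam (j + 1) - lam j))
    (hB1 : ∀ i, B 1 i = (∏ l ∈ Finset.Icc 1 g, (n l : ℤ)) * q 1 i)
    (hBrec : ∀ j, 2 ≤ j → j ≤ g → ∀ i,
      B j i = (p j i : ℤ) * B (j - 1) i + (∏ l ∈ Finset.Icc j g, (n l : ℤ)) * q j i)
    (hb1 : ∀ i, b 1 i = (p 1 i : ℤ) + q 1 i)
    (hbrec : ∀ j, 2 ≤ j → j ≤ g → ∀ i,
      b j i = (p j i : ℤ) * b (j - 1) i + q j i) :
    ∀ j, 1 ≤ j → j ≤ g → ∀ i,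
      ((B j i : ℚ) =
        (∏ l ∈ Finset.Icc j g, (n l : ℚ)) *
          (∏ l ∈ Finset.Icc 1 j, (p l i : ℚ)) * γ j i) ∧
      ((b j i : ℚ) =
        (∏ l ∈ Finset.Icc 1 j, (p l i : ℚ)) *
          (1 + (∑ l ∈ Finset.Icc 1 (j - 1), (1 - (n l : ℚ)) * γ l i) + γ j i)) := by
  intro j
  induction j with
  | zero => intro h; omega
  | succ j ih =>
    intro h1 hle i
    rcases Nat.eq_zero_or_pos j with rfl | hjpos
    · -- base case j = 1
      have hq : (lam 1 i) * (p 1 i : ℚ) = q 1 i := by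
        have h := hlamrec 1 le_rfl hg i
        simpa [hlam0] using h
      refine ⟨?_, ?_⟩
      · rw [hB1 i]
        push_cast
        rw [hγ1, Finset.Icc_self, Finset.prod_singleton, ← hq]
        ring
      · rw [hb1 i]
        push_cast
        rw [hγ1]
        norm_num [Finset.Icc_self, ← hq]
        ring
    · -- inductive step
      obtain ⟨k, rfl⟩ := Nat.exists_eq_succ_of_ne_zero hjpos.ne'
      have hkg : k + 1 < g := by omega
      obtain ⟨IB, Ib⟩ := ih (by omega) (by omega) i
      simp only [Nat.succ_eq_add_one, Nat.add_sub_cancel] at IB Ib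
      have hγr : γ (k + 2) i = (n (k + 1) : ℚ) * γ (k + 1) i
          + (lam (k + 2) i - lam (k + 1) i) := by
        have := congrFun (hγ (k + 1) (by omega) hkg) i
        simpa using this
      have hq : (lam (k + 2) i - lam (k + 1) i) *
          (∏ l ∈ Finset.Icc 1 (k + 2), (p l i : ℚ)) = q (k + 2) i := by
        have h := hlamrec (k + 2) (by omega) hle i
        simpa using h
      have hPp : (∏ l ∈ Finset.Icc 1 (k + 2), (p l i : ℚ)) =
          (∏ l ∈ Finset.Icc 1 (k + 1), (p l i : ℚ)) * (p (k + 2) i : ℚ) :=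
        Finset.prod_Icc_succ_top (by omega) _
      have hNn : ∀ (f : ℕ → ℚ), (∏ l ∈ Finset.Icc (k + 1) g, f l) =
          f (k + 1) * ∏ l ∈ Finset.Icc (k + 2) g, f l := by
        intro f
        rw [Finset.Icc_eq_cons_Ioc (by omega : k + 1 ≤ g), Finset.prod_cons,
          ← Finset.Icc_add_one_left_eq_Ioc]
        rfl
      constructor
      · have hB := hBrec (k + 2) (by omega) hle i
        rw [show k + 2 - 1 = k + 1 from rfl] at hB
        have hBq := congrArg (fun z : ℤ => (z : ℚ)) hB
        push_cast at hBq
        rw [hBq, IB, hγr, hPp, hNn (fun l => (n l : ℚ)), ← hq, hPp]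
        ring
      · have hb := hbrec (k + 2) (by omega) hle i
        rw [show k + 2 - 1 = k + 1 from rfl] at hb
        have hbq := congrArg (fun z : ℤ => (z : ℚ)) hb
        push_cast at hbq
        have hsum : (∑ l ∈ Finset.Icc 1 (k + 2 - 1), (1 - (n l : ℚ)) * γ l i) =
            (∑ l ∈ Finset.Icc 1 k, (1 - (n l : ℚ)) * γ l i)
            + (1 - (n (k + 1) : ℚ)) * γ (k + 1) i := by
          rw [show k + 2 - 1 = k + 1 from rfl]
          exact Finset.sum_Icc_succ_top (by omega) _
        rw [hbq, Ib, hsum, hγr, hPp, ← hq, hPp]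
        ring
end
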